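/- Let R and S be commutative rings, π : R → S a surjective ring homomorphism, e ∈ R a non-zero-divisor with ker(π) equal to the principal ideal (e), and c : R → S[[y]] an injective ring homomorphism into the power series ring such that c(e) = y and the constant coefficient of c(r) equals π(r) for all r ∈ R. If x ∈ R is such that c(x) has all coefficients of y^i for i < k equal to zero and coefficient of y^k equal to λ ∈ S, then there exists a unique q ∈ R with x = e^k · q, and moreover π(q) = λ. -/

import Mathlib

private lemma aux_div {R S : Type*} [CommRing R] [CommRing S] (π : R →+* S)
    (e : R) (hker : RingHom.ker π = Ideal.span {e})
    (c : R →+* PowerSeries S)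
    (hce : c e = PowerSeries.X)
    (hconst : ∀ r : R, PowerSeries.constantCoeff (c r) = π r) :
    ∀ (k : ℕ) (x : R), (∀ i < k, PowerSeries.coeff i (c x) = 0) →
      ∃ q : R, x = e ^ k * q := by
  intro k
  induction k with
  | zero => intro x _; exact ⟨x, by ring⟩
  | succ k ih =>
    intro x hlow
    have h0 : π x = 0 := by
      have := hlow 0 (Nat.succ_pos k)
      rw [PowerSeries.coeff_zero_eq_constantCoeff, hconst] at this
      exact this
    have hx : x ∈ Ideal.span {e} := by
      rw [← hker]; exact h0
    obtain ⟨x', hx'⟩ := Ideal.mem_span_singleton.mp hx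
    have hcx : c x = PowerSeries.X * c x' := by rw [hx', map_mul, hce]
    obtain ⟨q, hq⟩ := ih x' (by
      intro i hi
      have := hlow (i + 1) (by omega)
      rwa [hcx, PowerSeries.coeff_succ_X_mul] at this)
    exact ⟨q, by rw [hx', hq]; ring⟩

/-- Let `π : R → S` be surjective with kernel the principal ideal generated by a
non-zero-divisor `e`, and let `c : R → S[[y]]` be an injective ring homomorphism with
`c e = y` and constant coefficient of `c r` equal to `π r`. If `c x` has vanishing
coefficients below degree `k` and coefficient `λ` in degree `k`, then `x` is uniquely
divisible by `e^k` and the quotient maps to `λ` under `π`. -/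
theorem stmt4 {R S : Type*} [CommRing R] [CommRing S] (π : R →+* S)
    (hsurj : Function.Surjective π) (e : R) (he : e ∈ nonZeroDivisors R)
    (hker : RingHom.ker π = Ideal.span {e})
    (c : R →+* PowerSeries S) (hc : Function.Injective c)
    (hce : c e = PowerSeries.X)
    (hconst : ∀ r : R, PowerSeries.constantCoeff (c r) = π r)
    (x : R) (k : ℕ) (lam : S)
    (hlow : ∀ i < k, PowerSeries.coeff i (c x) = 0)
    (hlead : PowerSeries.coeff k (c x) = lam) :
    (∃! q : R, x = e ^ k * q) ∧ ∀ q : R, x = e ^ k * q → π q = lam := by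
  obtain ⟨q, hq⟩ := aux_div π e hker c hce hconst k x hlow
  have hek : e ^ k ∈ nonZeroDivisors R := pow_mem he k
  have hpi : ∀ q' : R, x = e ^ k * q' → π q' = lam := by
    intro q' hq'
    have : c x = PowerSeries.X ^ k * c q' := by rw [hq', map_mul, map_pow, hce]
    have h := hlead
    rw [this] at h
    have : (PowerSeries.coeff (0 + k)) (PowerSeries.X ^ k * c q') = lam := by
      simpa using h
    rw [PowerSeries.coeff_X_pow_mul, PowerSeries.coeff_zero_eq_constantCoeff, hconst] at this
    exact this
  refine ⟨⟨q, hq, ?_⟩, hpi⟩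
  intro q' hq'
  have : e ^ k * q' = e ^ k * q := by rw [← hq, ← hq']
  exact (mul_cancel_left_mem_nonZeroDivisors hek).mp this
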